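/- arXiv:2503.02079 — 4 statements merged into one kernel-verified Lean document; each statement's English description precedes it below -/
import Mathlib

section
/- If B(\alpha, \epsilon) is a function analytic (regular) in \epsilon such that the formal power series \exp\left(\int_0^{\alpha} \frac{du}{u}\frac{B(u,\epsilon)}{u\epsilon - B(u,\epsilon)}\right), expanded order by order in \alpha, has coefficients consisting only of pole terms in \epsilon (i.e. no nonnegative powers of \epsilon beyond the leading 1), then B(\alpha,\epsilon) is independent of \epsilon. -/
open PowerSeries

/-- A Laurent series in `ε` is *regular* if it has no pole terms. -/
def EpsRegular (c : LaurentSeries ℂ) : Prop := ∀ n : ℤ, n < 0 → c.coeff n = 0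

/-- A Laurent series in `ε` consists of *pole terms only*. -/
def EpsPoleOnly (c : LaurentSeries ℂ) : Prop := ∀ n : ℤ, 0 ≤ n → c.coeff n = 0

/-- The element `ε` of the Laurent series ring. -/
noncomputable def epsLS : LaurentSeries ℂ := HahnSeries.single 1 1

lemma LS_mul_coeff_zero {f g : LaurentSeries ℂ} {a b m : ℤ}
    (hf : ∀ i, a ≤ i → f.coeff i = 0) (hg : ∀ j, b ≤ j → g.coeff j = 0)
    (hm : a + b - 1 ≤ m) : (f * g).coeff m = 0 := by
  by_contra h
  have hmem : m ∈ (f * g).support := h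
  have h2 := HahnSeries.support_mul_subset hmem
  rw [Set.mem_add] at h2
  obtain ⟨i, hi, j, hj, hij⟩ := h2
  have hia : i < a := lt_of_not_ge fun hh => hi (hf i hh)
  have hjb : j < b := lt_of_not_ge fun hh => hj (hg j hh)
  omega

lemma LS_natCast_coeff (N : ℕ) (t : ℤ) (ht : t ≠ 0) :
    ((N : ℕ) : LaurentSeries ℂ).coeff t = 0 := by
  induction N with
  | zero => simp
  | succ k ih =>
    push_cast
    rw [HahnSeries.coeff_add, ih]
    have : (1 : LaurentSeries ℂ) = HahnSeries.single (0 : ℤ) (1 : ℂ) := rfl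
    rw [this, HahnSeries.coeff_single_of_ne ht]
    simp

/-- Let `B(α,ε)` be a formal power series in `α` (no constant term)
whose coefficients are Laurent series in `ε` regular at `ε = 0`.  Let
`Z = exp (∫_0^α du/u · B(u,ε)/(uε - B(u,ε)))`, characterized as the unique series
with constant term `1` satisfying the equivalent differential equation
`(αε - B) · α ∂_α Z = B · Z`.  If every coefficient of `α^n`, `n ≥ 1`, of `Z`
consists of pole terms in `ε` only, then `B` is independent of `ε`. -/
theorem MS_beta_eps_independent
    (B Z : PowerSeries (LaurentSeries ℂ))
    (hB0 : PowerSeries.coeff 0 B = 0)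
    (hBreg : ∀ n : ℕ, EpsRegular (PowerSeries.coeff n B))
    (hZ0 : PowerSeries.constantCoeff Z = 1)
    (hZode : (PowerSeries.X * PowerSeries.C epsLS - B) *
        (PowerSeries.X * PowerSeries.derivativeFun Z) = B * Z)
    (hpole : ∀ n : ℕ, 1 ≤ n → EpsPoleOnly (PowerSeries.coeff n Z)) :
    ∀ n : ℕ, ∀ m : ℤ, m ≠ 0 → (PowerSeries.coeff n B).coeff m = 0 := by
  have key : ∀ n : ℕ, ∀ m : ℤ, 1 ≤ m → (PowerSeries.coeff n B).coeff m = 0 := by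
    intro n
    induction n using Nat.strong_induction_on with
    | _ n IH =>
      intro m hm
      rcases Nat.eq_zero_or_pos n with h0 | hn
      · subst h0; rw [hB0]; simp
      have h0 : PowerSeries.coeff n
          ((PowerSeries.X * PowerSeries.C epsLS - B) *
            (PowerSeries.X * PowerSeries.derivativeFun Z)) =
          PowerSeries.coeff n (B * Z) := by rw [hZode]
      rw [PowerSeries.coeff_mul, PowerSeries.coeff_mul] at h0
      have h := congrArg (HahnSeries.coeff.addMonoidHom m) h0
      rw [map_sum, map_sum] at h
      simp only [HahnSeries.coeff.addMonoidHom_apply] at h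
      -- coefficient bound for coeff j (X * dZ)
      have hXdZ : ∀ j : ℕ, ∀ t : ℤ, 0 ≤ t →
          (PowerSeries.coeff j (PowerSeries.X * PowerSeries.derivativeFun Z)).coeff t = 0 := by
        intro j t ht
        match j with
        | 0 =>
          rw [PowerSeries.coeff_zero_eq_constantCoeff, map_mul, PowerSeries.constantCoeff_X,
            zero_mul]
          simp
        | j' + 1 =>
          rw [PowerSeries.coeff_succ_X_mul, show PowerSeries.derivativeFun Z = PowerSeries.derivative _ Z from rfl,
            PowerSeries.coeff_derivative]
          have hz : ∀ s : ℤ, (0:ℤ) ≤ s →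
              (PowerSeries.coeff (j' + 1) Z).coeff s = 0 :=
            fun s hs => hpole (j' + 1) (by omega) s hs
          have hc : ∀ s : ℤ, (1:ℤ) ≤ s →
              (((j' : LaurentSeries ℂ)) + 1).coeff s = 0 := by
            intro s hs
            have : ((j' : LaurentSeries ℂ)) + 1 = ((j' + 1 : ℕ) : LaurentSeries ℂ) := by
              push_cast; ring
            rw [this]
            exact LS_natCast_coeff (j' + 1) s (by omega)
          exact LS_mul_coeff_zero hz hc (by omega)
      -- LHS sum vanishes
      rw [Finset.sum_eq_zero (fun p hp => ?_)] at h
      · -- RHS sum equals (b_n).coeff m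
        rw [Finset.sum_eq_single_of_mem ((n, 0) : ℕ × ℕ)
          (by rw [Finset.HasAntidiagonal.mem_antidiagonal]; omega) (fun p hp hne => ?_)] at h
        · rw [PowerSeries.coeff_zero_eq_constantCoeff, hZ0, mul_one] at h
          exact h.symm
        · -- other RHS terms vanish
          rw [Finset.HasAntidiagonal.mem_antidiagonal] at hp
          have h2 : 1 ≤ p.2 := by
            rcases Nat.eq_zero_or_pos p.2 with hq | hq
            · exfalso; apply hne; have : p.1 = n := by omega
              exact Prod.ext this hq
            · exact hq
          have h1 : p.1 < n := by omega
          have hf : ∀ s : ℤ, (1:ℤ) ≤ s →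
              (PowerSeries.coeff p.1 B).coeff s = 0 :=
            fun s hs => IH p.1 h1 s hs
          have hg : ∀ s : ℤ, (0:ℤ) ≤ s →
              (PowerSeries.coeff p.2 Z).coeff s = 0 :=
            fun s hs => hpole p.2 h2 s hs
          exact LS_mul_coeff_zero hf hg (by omega)
      · -- each LHS term vanishes
        rw [Finset.HasAntidiagonal.mem_antidiagonal] at hp
        rcases Nat.eq_zero_or_pos p.2 with hq | hq
        · have : (PowerSeries.coeff p.2
              (PowerSeries.X * PowerSeries.derivativeFun Z)) = 0 := by
            rw [hq, PowerSeries.coeff_zero_eq_constantCoeff, map_mul,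
              PowerSeries.constantCoeff_X, zero_mul]
          rw [this, mul_zero]; simp
        · have h1 : p.1 < n := by omega
          have hf : ∀ s : ℤ, (2:ℤ) ≤ s →
              (PowerSeries.coeff p.1
                (PowerSeries.X * PowerSeries.C epsLS - B)).coeff s = 0 := by
            intro s hs
            rw [map_sub, HahnSeries.coeff_sub, IH p.1 h1 s (by omega), sub_zero]
            match hp1 : p.1 with
            | 0 =>
              rw [PowerSeries.coeff_zero_eq_constantCoeff, map_mul,
                PowerSeries.constantCoeff_X, zero_mul]
              simp
            | i' + 1 =>
              rw [PowerSeries.coeff_succ_X_mul, PowerSeries.coeff_C]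
              split
              · exact HahnSeries.coeff_single_of_ne (by omega)
              · simp
          exact LS_mul_coeff_zero hf (fun t ht => hXdZ p.2 t ht) (by omega)
  intro n m hm
  rcases lt_or_gt_of_ne hm with hlt | hgt
  · exact hBreg n m hlt
  · exact key n m (by omega)
end

section
/- Let \gamma(\alpha,\epsilon) = \gamma(\alpha) + \epsilon g(\alpha) + O(\epsilon^2) be a formal solution of the equation obtained by expanding (T_0(\rho) + \epsilon T_0(\rho)T_1(\rho))|_{\rho \mapsto \gamma(\alpha,\epsilon) - \epsilon\alpha\partial_\alpha} = \alpha to first order in \epsilon, where the operator substitution means L-to-derivative replacement acting on the constant function (acting on \gamma itself via the convention described). Then at order \epsilon^0 one has T_0(\gamma(\alpha)) = \alpha, and at order \epsilon^1: g(\alpha) = \alpha\frac{\frac{1}{2}\partial_\rho^2 T_0|_{\rho=\gamma(\alpha)} \cdot \partial_\alpha\gamma(\alpha) - T_1(\gamma(\alpha))}{\partial_\rho T_0|_{\rho=\gamma(\alpha)}}. -/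
open Polynomial Finset

lemma evalD (p : Polynomial ℝ) (N : ℕ) (h : p.natDegree < N) (c : ℝ) :
    p.derivative.eval c = ∑ j ∈ range N, p.coeff j * ((j : ℝ) * c ^ (j - 1)) := by
  obtain ⟨M, rfl⟩ : ∃ M, N = M + 1 := ⟨N - 1, by omega⟩
  have hd : p.derivative.natDegree < M + 1 :=
    lt_of_le_of_lt (Polynomial.natDegree_derivative_le p) (by omega)
  have hM : p.coeff (M + 1) = 0 := Polynomial.coeff_eq_zero_of_natDegree_lt (by omega)
  rw [Polynomial.eval_eq_sum_range' hd, Finset.sum_range_succ]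
  conv_rhs => rw [Finset.sum_range_succ']
  simp only [Polynomial.coeff_derivative, hM, Nat.cast_zero, zero_mul, mul_zero, add_zero,
    zero_add, zero_mul, zero_add]
  apply Finset.sum_congr rfl
  intro i _
  push_cast
  ring_nf

lemma evalDD (p : Polynomial ℝ) (N : ℕ) (h : p.natDegree < N) (c : ℝ) :
    p.derivative.derivative.eval c =
      ∑ j ∈ range N, p.coeff j * ((j : ℝ) * ((j - 1 : ℕ) : ℝ) * c ^ (j - 2)) := by
  obtain ⟨M, rfl⟩ : ∃ M, N = M + 1 := ⟨N - 1, by omega⟩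
  have hd : p.derivative.natDegree < M + 1 :=
    lt_of_le_of_lt (Polynomial.natDegree_derivative_le p) (by omega)
  have hM : p.coeff (M + 1) = 0 := Polynomial.coeff_eq_zero_of_natDegree_lt (by omega)
  rw [evalD p.derivative (M + 1) hd c, Finset.sum_range_succ]
  conv_rhs => rw [Finset.sum_range_succ']
  simp only [Polynomial.coeff_derivative, hM, Nat.cast_zero, zero_mul, mul_zero, add_zero,
    zero_add, Nat.add_sub_cancel]
  apply Finset.sum_congr rfl
  intro i _
  have : i + 1 - 2 = i - 1 := by omega
  rw [this]
  push_cast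
  ring

lemma innerSumAux (c gg a d : ℝ) (j : ℕ) :
    ∑ k ∈ range j, c ^ k * (gg * c ^ (j - 1 - k) -
        a * (((j - 1 - k : ℕ) : ℝ) * c ^ (j - 1 - k - 1) * d))
    = gg * ((j : ℝ) * c ^ (j - 1)) -
        a * d * ((j : ℝ) * ((j - 1 : ℕ) : ℝ) / 2 * c ^ (j - 2)) := by
  have step : ∀ k ∈ range j, c ^ k * (gg * c ^ (j - 1 - k) -
        a * (((j - 1 - k : ℕ) : ℝ) * c ^ (j - 1 - k - 1) * d))
      = gg * c ^ (j - 1) - a * d * (((j - 1 - k : ℕ) : ℝ) * c ^ (j - 2)) := by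
    intro k hk
    have hkj : k < j := Finset.mem_range.mp hk
    have e1 : c ^ k * c ^ (j - 1 - k) = c ^ (j - 1) := by
      rw [← pow_add]; congr 1; omega
    by_cases h2 : k + 2 ≤ j
    · have e2 : c ^ k * c ^ (j - 1 - k - 1) = c ^ (j - 2) := by
        rw [← pow_add]; congr 1; omega
      calc c ^ k * (gg * c ^ (j - 1 - k) -
              a * (((j - 1 - k : ℕ) : ℝ) * c ^ (j - 1 - k - 1) * d))
          = gg * (c ^ k * c ^ (j - 1 - k)) -
              a * d * (((j - 1 - k : ℕ) : ℝ) * (c ^ k * c ^ (j - 1 - k - 1))) := by ring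
        _ = gg * c ^ (j - 1) - a * d * (((j - 1 - k : ℕ) : ℝ) * c ^ (j - 2)) := by
            rw [e1, e2]
    · have hz : j - 1 - k = 0 := by omega
      rw [hz] at e1 ⊢
      simp only [pow_zero, mul_one] at e1
      simp only [Nat.cast_zero, zero_mul, mul_zero, sub_zero, pow_zero, mul_one]
      linear_combination gg * e1
  rw [Finset.sum_congr rfl step, Finset.sum_sub_distrib, Finset.sum_const,
    Finset.card_range, nsmul_eq_mul]
  have hS : ∑ k ∈ range j, (((j - 1 - k : ℕ) : ℝ)) = (j : ℝ) * ((j - 1 : ℕ) : ℝ) / 2 := by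
    rw [← Nat.cast_sum]
    rw [show (∑ k ∈ range j, (j - 1 - k)) = ∑ k ∈ range j, k from
      Finset.sum_range_reflect (fun i => i) j]
    have h2 : ((∑ i ∈ range j, i : ℕ) : ℝ) * 2 = (j : ℝ) * ((j - 1 : ℕ) : ℝ) := by
      exact_mod_cast congrArg (Nat.cast : ℕ → ℝ) (Finset.sum_range_id_mul_two j)
    linarith
  have e3 : ∑ k ∈ range j, (a * d * (((j - 1 - k : ℕ) : ℝ) * c ^ (j - 2)))
      = a * d * c ^ (j - 2) * ∑ k ∈ range j, (((j - 1 - k : ℕ) : ℝ)) := by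
    rw [Finset.mul_sum]; exact Finset.sum_congr rfl fun k _ => by ring
  rw [e3, hS]; ring

/-- Theorem 3 of the paper: expanding the pseudo-differential
equation `(T₀(ρ) + ε T₀(ρ)T₁(ρ))|_{ρ ↦ γ(α,ε) - ε α ∂_α} = α` to first order in
`ε`, with `γ(α,ε) = γ(α) + ε g(α) + O(ε²)`.  The order-`ε⁰` part is
`T₀(γ(α)) = α`; the order-`ε¹` part is
`∑_j t_j [ε¹]((γ + ε(g - α∂_α))^j · 1) + α T₁(γ(α)) = 0`, where
`[ε¹]((γ + ε(g - α∂))^j · 1) = ∑_{k=0}^{j-1} γ^k (g γ^{j-1-k} - α ∂_α γ^{j-1-k})`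
(operator ordering kept).  Then
`g(α) = α (½ T₀''(γ) γ'(α) - T₁(γ)) / T₀'(γ)`. -/
theorem g_Mellin (T0 : Polynomial ℝ) (T1 γ γ' g : ℝ → ℝ)
    (hT00 : T0.coeff 0 = 0) (hT01 : T0.coeff 1 ≠ 0)
    (hγ : ∀ α : ℝ, HasDerivAt γ (γ' α) α)
    (horder0 : ∀ α : ℝ, T0.eval (γ α) = α)
    (horder1 : ∀ α : ℝ,
      (∑ j ∈ range (T0.natDegree + 1), T0.coeff j *
        ∑ k ∈ range j,
          γ α ^ k * (g α * γ α ^ (j - 1 - k) -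
            α * deriv (fun x => γ x ^ (j - 1 - k)) α))
        + α * T1 (γ α) = 0)
    (α : ℝ) (hden : T0.derivative.eval (γ α) ≠ 0) :
    g α = α * ((1/2) * T0.derivative.derivative.eval (γ α) * γ' α - T1 (γ α))
            / T0.derivative.eval (γ α) := by
  have hN : T0.natDegree < T0.natDegree + 1 := Nat.lt_succ_self _
  have hder : ∀ m : ℕ, deriv (fun x => γ x ^ m) α = (m : ℝ) * γ α ^ (m - 1) * γ' α :=
    fun m => ((hγ α).pow m).deriv
  have H := horder1 α
  simp only [hder] at H
  have e : ∀ j ∈ range (T0.natDegree + 1),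
      T0.coeff j * ∑ k ∈ range j, γ α ^ k * (g α * γ α ^ (j - 1 - k) -
          α * (((j - 1 - k : ℕ) : ℝ) * γ α ^ (j - 1 - k - 1) * γ' α))
      = T0.coeff j * (g α * ((j : ℝ) * γ α ^ (j - 1)) -
          α * γ' α * ((j : ℝ) * ((j - 1 : ℕ) : ℝ) / 2 * γ α ^ (j - 2))) :=
    fun j _ => by rw [innerSumAux]
  rw [Finset.sum_congr rfl e] at H
  have hD1 := evalD T0 (T0.natDegree + 1) hN (γ α)
  have hD2 := evalDD T0 (T0.natDegree + 1) hN (γ α)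
  have key : g α * T0.derivative.eval (γ α) -
      α * γ' α * ((1 : ℝ)/2) * T0.derivative.derivative.eval (γ α) + α * T1 (γ α) = 0 := by
    rw [hD1, hD2, Finset.mul_sum, Finset.mul_sum, ← Finset.sum_sub_distrib]
    rw [Finset.sum_congr rfl (fun j (_ : j ∈ range (T0.natDegree + 1)) => by ring :
      ∀ j ∈ range (T0.natDegree + 1),
        g α * (T0.coeff j * ((j : ℝ) * γ α ^ (j - 1))) -
          α * γ' α * ((1 : ℝ)/2) * (T0.coeff j * ((j : ℝ) * ((j - 1 : ℕ) : ℝ) * γ α ^ (j - 2)))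
        = T0.coeff j * (g α * ((j : ℝ) * γ α ^ (j - 1)) -
            α * γ' α * ((j : ℝ) * ((j - 1 : ℕ) : ℝ) / 2 * γ α ^ (j - 2))))]
    exact H
  rw [eq_div_iff hden]
  linear_combination key
end

section
/- Define g(\alpha) = \frac{-\alpha}{1-4\alpha} - \alpha\frac{2\gamma_E + \psi\left(\frac{3-\sqrt{1-4\alpha}}{2}\right) + \psi\left(\frac{3+\sqrt{1-4\alpha}}{2}\right)}{\sqrt{1-4\alpha}}, where \psi is the digamma function and \gamma_E the Euler–Mascheroni constant. Then for \alpha near 0, \exp\left(-\int_0^\alpha \frac{g(u)}{u}du\right) = \frac{e^{\gamma_E(1-\sqrt{1-4\alpha})}\,\Gamma\left(\frac{3-\sqrt{1-4\alpha}}{2}\right)}{(1-4\alpha)^{1/4}\,\Gamma\left(\frac{3+\sqrt{1-4\alpha}}{2}\right)}. -/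
set_option linter.unnecessarySimpa false


/-- The real digamma function `ψ = (ln Γ)' = Γ'/Γ`. -/
noncomputable def digamma (x : ℝ) : ℝ := deriv Real.Gamma x / Real.Gamma x

lemma aux_ne_neg_nat {y : ℝ} (hy : 0 < y) : ∀ m : ℕ, y ≠ -m := by
  intro m h
  have : (0:ℝ) ≤ m := Nat.cast_nonneg m
  linarith

lemma aux_deriv_Gamma_eq {y : ℝ} (hy : 0 < y) :
    deriv Real.Gamma y = (deriv Complex.Gamma ↑y).re := by
  have hne : ∀ m : ℕ, (y:ℂ) ≠ -m := by
    intro m h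
    have : y = -(m:ℝ) := by exact_mod_cast h
    have : (0:ℝ) ≤ m := Nat.cast_nonneg m
    linarith
  have hc : HasDerivAt Complex.Gamma (deriv Complex.Gamma ↑y) ↑y :=
    (Complex.differentiableAt_Gamma _ hne).hasDerivAt
  have hr : HasDerivAt Real.Gamma (deriv Complex.Gamma ↑y).re y := by
    have := hc.real_of_complex
    simp only [Complex.Gamma_ofReal, Complex.ofReal_re] at this
    exact this
  exact hr.deriv

lemma contAt_derivGamma {x : ℝ} (hx : 0 < x) : ContinuousAt (deriv Real.Gamma) x := by
  have hU : IsOpen {s : ℂ | 0 < s.re} := isOpen_lt continuous_const Complex.continuous_re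
  have hA : AnalyticOnNhd ℂ Complex.Gamma {s : ℂ | 0 < s.re} := by
    refine DifferentiableOn.analyticOnNhd (fun s hs => ?_) hU
    refine (Complex.differentiableAt_Gamma s (fun m => ?_)).differentiableWithinAt
    intro h
    rw [h] at hs
    simp only [Set.mem_setOf_eq, Complex.neg_re, Complex.natCast_re] at hs
    have : (0:ℝ) ≤ m := Nat.cast_nonneg m
    linarith
  have h1 : ContinuousAt (deriv Complex.Gamma) ↑x :=
    (hA.deriv ↑x (by simpa using hx)).continuousAt
  have h2 : ContinuousAt (fun y : ℝ => (deriv Complex.Gamma ↑y).re) x :=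
    Complex.continuous_re.continuousAt.comp
      (h1.comp Complex.continuous_ofReal.continuousAt)
  refine h2.congr ?_
  filter_upwards [Ioi_mem_nhds hx] with y hy
  exact (aux_deriv_Gamma_eq hy).symm

lemma digamma_continuousAt {x : ℝ} (hx : 0 < x) : ContinuousAt digamma x := by
  have hΓ : ContinuousAt Real.Gamma x :=
    (Real.differentiableAt_Gamma (aux_ne_neg_nat hx)).continuousAt
  exact (contAt_derivGamma hx).div hΓ (Real.Gamma_pos_of_pos hx).ne'

lemma hasDerivAt_logGamma {x : ℝ} (hx : 0 < x) :
    HasDerivAt (fun y => Real.log (Real.Gamma y)) (digamma x) x := by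
  have hd : DifferentiableAt ℝ Real.Gamma x := Real.differentiableAt_Gamma (aux_ne_neg_nat hx)
  exact hd.hasDerivAt.log (Real.Gamma_pos_of_pos hx).ne'

noncomputable def Hfun : ℝ → ℝ := fun u =>
  Real.eulerMascheroniConstant * (1 - Real.sqrt (1 - 4*u))
  + Real.log (Real.Gamma ((3 - Real.sqrt (1 - 4*u)) / 2))
  - (1/4) * Real.log (1 - 4*u)
  - Real.log (Real.Gamma ((3 + Real.sqrt (1 - 4*u)) / 2))

noncomputable def Dfun : ℝ → ℝ := fun u =>
  1/(1-4*u) + (2 * Real.eulerMascheroniConstant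
    + digamma ((3 - Real.sqrt (1 - 4*u)) / 2)
    + digamma ((3 + Real.sqrt (1 - 4*u)) / 2)) / Real.sqrt (1 - 4*u)

lemma sqrt_lt_three {u : ℝ} (h2 : -2 < u) (h4 : u < 1/4) : Real.sqrt (1 - 4*u) < 3 := by
  have h9 : 1 - 4*u < 9 := by linarith
  calc Real.sqrt (1 - 4*u) < Real.sqrt 9 := by
        apply Real.sqrt_lt_sqrt (by linarith) h9
    _ = 3 := by
        rw [show (9:ℝ) = 3^2 by norm_num, Real.sqrt_sq (by norm_num)]

lemma hasDerivAt_Hfun {u : ℝ} (h2 : -2 < u) (h4 : u < 1/4) : HasDerivAt Hfun (Dfun u) u := by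
  have hpos : 0 < 1 - 4*u := by linarith
  set s := Real.sqrt (1 - 4*u) with hs_def
  have hs0 : 0 < s := Real.sqrt_pos.mpr hpos
  have hs3 : s < 3 := sqrt_lt_three h2 h4
  have hpm : 0 < (3 - s) / 2 := by linarith
  have hpp : 0 < (3 + s) / 2 := by linarith
  have hinner : HasDerivAt (fun u : ℝ => 1 - 4*u) (-4) u := by
    have h := ((hasDerivAt_id u).const_mul (4:ℝ)).const_sub (1:ℝ)
    rw [show (-4:ℝ) = -(4*1) by ring]
    exact h
  have hsq : HasDerivAt (fun u : ℝ => Real.sqrt (1 - 4*u)) (-2/s) u := by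
    have h := (Real.hasDerivAt_sqrt hpos.ne').comp u hinner
    rw [show -2/s = 1 / (2 * Real.sqrt (1 - 4*u)) * -4 by rw [← hs_def]; field_simp; ring]
    exact h
  have h1 : HasDerivAt (fun u : ℝ => Real.eulerMascheroniConstant * (1 - Real.sqrt (1 - 4*u)))
      (Real.eulerMascheroniConstant * (0 - (-2/s))) u :=
    ((hasDerivAt_const u (1:ℝ)).sub hsq).const_mul _
  have him : HasDerivAt (fun u : ℝ => (3 - Real.sqrt (1 - 4*u)) / 2) ((0 - (-2/s))/2) u :=
    ((hasDerivAt_const u (3:ℝ)).sub hsq).div_const 2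
  have hip : HasDerivAt (fun u : ℝ => (3 + Real.sqrt (1 - 4*u)) / 2) ((0 + (-2/s))/2) u :=
    ((hasDerivAt_const u (3:ℝ)).add hsq).div_const 2
  have hm : HasDerivAt (fun u : ℝ => Real.log (Real.Gamma ((3 - Real.sqrt (1 - 4*u)) / 2)))
      (digamma ((3 - s)/2) * ((0 - (-2/s))/2)) u := by
    have h := (hasDerivAt_logGamma hpm).comp u him
    exact h
  have hp : HasDerivAt (fun u : ℝ => Real.log (Real.Gamma ((3 + Real.sqrt (1 - 4*u)) / 2)))
      (digamma ((3 + s)/2) * ((0 + (-2/s))/2)) u := by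
    have h := (hasDerivAt_logGamma hpp).comp u hip
    exact h
  have hl : HasDerivAt (fun u : ℝ => (1/4 : ℝ) * Real.log (1 - 4*u))
      ((1/4 : ℝ) * ((1 - 4*u)⁻¹ * (-4))) u :=
    ((Real.hasDerivAt_log hpos.ne').comp u hinner).const_mul _
  have htot := ((h1.add hm).sub hl).sub hp
  have : Hfun = fun u : ℝ =>
      Real.eulerMascheroniConstant * (1 - Real.sqrt (1 - 4*u))
      + Real.log (Real.Gamma ((3 - Real.sqrt (1 - 4*u)) / 2))
      - (1/4 : ℝ) * Real.log (1 - 4*u)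
      - Real.log (Real.Gamma ((3 + Real.sqrt (1 - 4*u)) / 2)) := rfl
  have hde : Real.eulerMascheroniConstant * (0 - (-2/s)) + digamma ((3 - s)/2) * ((0 - (-2/s))/2)
      - (1/4 : ℝ) * ((1 - 4*u)⁻¹ * (-4)) - digamma ((3 + s)/2) * ((0 + (-2/s))/2) = Dfun u := by
    rw [Dfun]
    rw [← hs_def]
    field_simp
    ring
  rw [this, ← hde]
  exact htot

lemma continuousAt_Dfun {u : ℝ} (h2 : -2 < u) (h4 : u < 1/4) : ContinuousAt Dfun u := by
  have hpos : 0 < 1 - 4*u := by linarith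
  have hs0 : 0 < Real.sqrt (1 - 4*u) := Real.sqrt_pos.mpr hpos
  have hs3 : Real.sqrt (1 - 4*u) < 3 := sqrt_lt_three h2 h4
  have hc1 : ContinuousAt (fun u : ℝ => 1 - 4*u) u := by fun_prop
  have hcs : ContinuousAt (fun u : ℝ => Real.sqrt (1 - 4*u)) u :=
    Real.continuous_sqrt.continuousAt.comp hc1
  have hfm : ContinuousAt (fun u : ℝ => (3 - Real.sqrt (1 - 4*u)) / 2) u :=
    (continuousAt_const.sub hcs).div_const 2
  have hfp : ContinuousAt (fun u : ℝ => (3 + Real.sqrt (1 - 4*u)) / 2) u :=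
    (continuousAt_const.add hcs).div_const 2
  have hψm : ContinuousAt (fun u : ℝ => digamma ((3 - Real.sqrt (1 - 4*u)) / 2)) u :=
    ContinuousAt.comp (x := u)
      (digamma_continuousAt (by linarith : (0:ℝ) < (3 - Real.sqrt (1 - 4*u))/2)) hfm
  have hψp : ContinuousAt (fun u : ℝ => digamma ((3 + Real.sqrt (1 - 4*u)) / 2)) u :=
    ContinuousAt.comp (x := u)
      (digamma_continuousAt (by linarith : (0:ℝ) < (3 + Real.sqrt (1 - 4*u))/2)) hfp
  exact (continuousAt_const.div hc1 hpos.ne').add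
    (((continuousAt_const.add hψm).add hψp).div hcs hs0.ne')

/-- with
`g(α) = -α/(1-4α) - α (2γ_E + ψ((3-√(1-4α))/2) + ψ((3+√(1-4α))/2))/√(1-4α)`,
one has, for `α` near `0`,
`exp(-∫_0^α g(u)/u du)
  = e^{γ_E(1-√(1-4α))} Γ((3-√(1-4α))/2) / ((1-4α)^{1/4} Γ((3+√(1-4α))/2))`. -/
theorem yukawa_gamma0_integral (g : ℝ → ℝ)
    (hg : ∀ u : ℝ, g u = -u / (1 - 4*u) -
      u * (2 * Real.eulerMascheroniConstant
            + digamma ((3 - Real.sqrt (1 - 4*u)) / 2)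
            + digamma ((3 + Real.sqrt (1 - 4*u)) / 2)) / Real.sqrt (1 - 4*u)) :
    ∀ α : ℝ, -2 < α → α < 1/4 →
      Real.exp (-∫ u in (0:ℝ)..α, g u / u) =
        Real.exp (Real.eulerMascheroniConstant * (1 - Real.sqrt (1 - 4*α)))
            * Real.Gamma ((3 - Real.sqrt (1 - 4*α)) / 2)
          / ((1 - 4*α) ^ ((1:ℝ)/4) * Real.Gamma ((3 + Real.sqrt (1 - 4*α)) / 2)) := by
  intro α hα2 hα4
  have hsub : Set.uIcc (0:ℝ) α ⊆ Set.Ioo (-2:ℝ) (1/4) := by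
    intro x hx
    rcases Set.mem_uIcc.mp hx with ⟨h1, h2⟩ | ⟨h1, h2⟩ <;> exact ⟨by linarith, by linarith⟩
  have hderiv : ∀ x ∈ Set.uIcc (0:ℝ) α, HasDerivAt Hfun (Dfun x) x :=
    fun x hx => hasDerivAt_Hfun (hsub hx).1 (hsub hx).2
  have hcont : ContinuousOn Dfun (Set.uIcc (0:ℝ) α) := fun x hx =>
    (continuousAt_Dfun (hsub hx).1 (hsub hx).2).continuousWithinAt
  have hint : IntervalIntegrable Dfun MeasureTheory.volume 0 α := hcont.intervalIntegrable
  have hFTC : ∫ u in (0:ℝ)..α, Dfun u = Hfun α - Hfun 0 :=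
    intervalIntegral.integral_eq_sub_of_hasDerivAt hderiv hint
  have hH0 : Hfun 0 = 0 := by
    have hΓ2 : Real.Gamma 2 = 1 := by
      simpa using Real.Gamma_nat_eq_factorial 1
    simp [Hfun, Real.sqrt_one, Real.Gamma_one]
    norm_num [hΓ2]
  have hcongr : ∫ u in (0:ℝ)..α, g u / u = ∫ u in (0:ℝ)..α, -Dfun u := by
    apply intervalIntegral.integral_congr_ae
    have h0 : ∀ᵐ u : ℝ ∂MeasureTheory.volume, u ≠ 0 := by
      rw [MeasureTheory.ae_iff]
      convert Real.volume_singleton (a := 0) using 2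
      ext x; simp
    filter_upwards [h0] with u hu hmem
    have hmem' : u ∈ Set.Ioo (-2:ℝ) (1/4) := hsub (Set.uIoc_subset_uIcc hmem)
    have hpos : 0 < 1 - 4*u := by have := hmem'.2; linarith
    have hs0 : 0 < Real.sqrt (1 - 4*u) := Real.sqrt_pos.mpr hpos
    rw [hg u, Dfun]
    field_simp
    ring
  have hIg : ∫ u in (0:ℝ)..α, g u / u = -Hfun α := by
    rw [hcongr, intervalIntegral.integral_neg, hFTC, hH0]; ring
  rw [hIg, neg_neg]
  -- now show exp (Hfun α) = RHS
  have hpos : 0 < 1 - 4*α := by linarith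
  have hs0 : 0 < Real.sqrt (1 - 4*α) := Real.sqrt_pos.mpr hpos
  have hs3 : Real.sqrt (1 - 4*α) < 3 := sqrt_lt_three hα2 hα4
  have hΓm : 0 < Real.Gamma ((3 - Real.sqrt (1 - 4*α)) / 2) :=
    Real.Gamma_pos_of_pos (by linarith)
  have hΓp : 0 < Real.Gamma ((3 + Real.sqrt (1 - 4*α)) / 2) :=
    Real.Gamma_pos_of_pos (by linarith)
  have h14 : Real.exp ((1/4) * Real.log (1 - 4*α)) = (1 - 4*α) ^ ((1:ℝ)/4) := by
    rw [Real.rpow_def_of_pos hpos, mul_comm]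
  rw [Hfun]
  rw [Real.exp_sub, Real.exp_sub, Real.exp_add, Real.exp_log hΓm, Real.exp_log hΓp, h14,
    div_div]
end

section
/- Let \gamma: I \to \mathbb{R} be continuous on an interval containing 0 with \gamma(u)/u bounded near 0, and \epsilon \neq 0. Then G(\alpha, L) := \exp\left(\int_{\alpha e^{-\epsilon L}}^{\alpha} \frac{\gamma(u)}{u\epsilon} du\right) satisfies the Callan–Symanzik equation \partial_L G(\alpha, L) = (\gamma(\alpha) - \epsilon\alpha\partial_\alpha)G(\alpha, L) with G(\alpha, 0) = 1. Moreover, if \gamma is continuous at every point, \lim_{\epsilon \to 0} G(\alpha, L) = e^{L\gamma(\alpha)} for fixed \alpha, L. -/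
open Filter MeasureTheory

private lemma csaux_cont (γ : ℝ → ℝ) (hγ : Continuous γ) :
    ContinuousOn (fun u => γ u / u) (Set.Ioi (0:ℝ)) :=
  hγ.continuousOn.div continuousOn_id (fun x hx => ne_of_gt hx)

private lemma csaux_intInt (γ : ℝ → ℝ) (hγ : Continuous γ) {a b : ℝ}
    (ha : 0 < a) (hb : 0 < b) :
    IntervalIntegrable (fun u => γ u / u) volume a b := by
  apply ContinuousOn.intervalIntegrable
  apply (csaux_cont γ hγ).mono
  intro x hx
  exact lt_of_lt_of_le (lt_min ha hb) hx.1

private lemma csaux_deriv (γ : ℝ → ℝ) (hγ : Continuous γ) {c x : ℝ} (hc : 0 < c) (hx : 0 < x) :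
    HasDerivAt (fun y => ∫ u in c..y, γ u / u) (γ x / x) x :=
  intervalIntegral.integral_hasDerivAt_right (csaux_intInt γ hγ hc hx)
    ((csaux_cont γ hγ).stronglyMeasurableAtFilter isOpen_Ioi x hx)
    ((csaux_cont γ hγ).continuousAt (Ioi_mem_nhds hx))

private lemma csaux_G (γ : ℝ → ℝ) (hγ : Continuous γ) {ε α a : ℝ} (L : ℝ)
    (hα : 0 < α) (ha : 0 < a) :
    (∫ u in (a * Real.exp (-ε * L))..a, γ u / (u * ε)) =
      ((∫ u in α..a, γ u / u) - ∫ u in α..(a * Real.exp (-ε * L)), γ u / u) / ε := by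
  have hk : 0 < a * Real.exp (-ε * L) := mul_pos ha (Real.exp_pos _)
  rw [intervalIntegral.integral_interval_sub_left (csaux_intInt γ hγ hα ha)
    (csaux_intInt γ hγ hα hk), ← intervalIntegral.integral_div]
  exact intervalIntegral.integral_congr (fun u _ => (div_div _ _ _).symm)

/-- `G(α,L) = exp(∫_{α e^{-εL}}^α γ(u)/(uε) du)` solves the
Callan–Symanzik equation `∂_L G = (γ(α) - ε α ∂_α) G` with `G(α,0) = 1`, and
`G → e^{L γ(α)}` as `ε → 0`. -/
theorem callan_symanzik_solution (γ : ℝ → ℝ) (hγ : Continuous γ)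
    (C d : ℝ) (hd : 0 < d) (hbd : ∀ u : ℝ, |u| < d → |γ u| ≤ C * |u|)
    (G : ℝ → ℝ → ℝ → ℝ)
    (hG : G = fun ε α L =>
      Real.exp (∫ u in (α * Real.exp (-ε * L))..α, γ u / (u * ε))) :
    (∀ ε : ℝ, ε ≠ 0 → ∀ α : ℝ, 0 < α → ∀ L : ℝ,
        HasDerivAt (fun L' => G ε α L')
          (γ α * G ε α L - ε * α * deriv (fun a => G ε a L) α) L ∧
        G ε α 0 = 1) ∧
      (∀ α L : ℝ, 0 < α →
        Tendsto (fun ε => G ε α L) (nhdsWithin 0 {(0:ℝ)}ᶜ)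
          (nhds (Real.exp (L * γ α)))) := by
  constructor
  · intro ε hε α hα L
    set h : ℝ → ℝ := fun y => ∫ u in α..y, γ u / u with hh
    have hhα : h α = 0 := intervalIntegral.integral_same
    have hx : 0 < α * Real.exp (-ε * L) := mul_pos hα (Real.exp_pos _)
    have hGr : ∀ a L', 0 < a →
        G ε a L' = Real.exp ((h a - h (a * Real.exp (-ε * L'))) / ε) := by
      intro a L' ha
      rw [hG]
      simp only
      rw [csaux_G γ hγ L' hα ha]
    have hA : HasDerivAt (fun a => G ε a L)
        (Real.exp ((h α - h (α * Real.exp (-ε * L))) / ε) *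
          ((γ α / α - γ (α * Real.exp (-ε * L)) / (α * Real.exp (-ε * L)) *
            (1 * Real.exp (-ε * L))) / ε)) α := by
      have h1 : HasDerivAt (fun a => h (a * Real.exp (-ε * L)))
          (γ (α * Real.exp (-ε * L)) / (α * Real.exp (-ε * L)) * (1 * Real.exp (-ε * L))) α := by
        have := (csaux_deriv γ hγ hα hx).comp α ((hasDerivAt_id α).mul_const (Real.exp (-ε * L))); exact this
      have h2 := (((csaux_deriv γ hγ hα hα).sub h1).div_const ε).exp
      apply h2.congr_of_eventuallyEq
      filter_upwards [Ioi_mem_nhds hα] with a ha using hGr a L ha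
    have hB : HasDerivAt (fun L' => G ε α L')
        (Real.exp ((h α - h (α * Real.exp (-ε * L))) / ε) *
          (-(γ (α * Real.exp (-ε * L)) / (α * Real.exp (-ε * L)) *
            (α * (Real.exp (-ε * L) * (-ε * 1)))) / ε)) L := by
      have h1 : HasDerivAt (fun L' => α * Real.exp (-ε * L'))
          (α * (Real.exp (-ε * L) * (-ε * 1))) L :=
        (((hasDerivAt_id L).const_mul (-ε)).exp).const_mul α
      have h2 := (csaux_deriv γ hγ hα hx).comp L h1
      have h3 := ((h2.const_sub (h α)).div_const ε).exp
      apply h3.congr_of_eventuallyEq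
      filter_upwards with L' using hGr α L' hα
    refine ⟨?_, by rw [hG]; simp⟩
    rw [hA.deriv, hGr α L hα]
    have hkne : Real.exp (-ε * L) ≠ 0 := Real.exp_ne_zero _
    have hαne : α ≠ 0 := ne_of_gt hα
    have hxne : α * Real.exp (-ε * L) ≠ 0 := ne_of_gt hx
    convert hB using 1
    field_simp
    ring
  · intro α L hα
    set h : ℝ → ℝ := fun y => ∫ u in α..y, γ u / u with hh
    have hhα : h α = 0 := intervalIntegral.integral_same
    have hinner : HasDerivAt (fun e => α * Real.exp (-e * L))
        (α * (Real.exp (-(0:ℝ) * L) * (-1 * L))) 0 :=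
      (((hasDerivAt_id (0:ℝ)).neg.mul_const L).exp).const_mul α
    have hpt : α * Real.exp (-(0:ℝ) * L) = α := by simp
    have hc : HasDerivAt h (γ α / α) (α * Real.exp (-(0:ℝ) * L)) := by
      rw [hpt]; exact csaux_deriv γ hγ hα hα
    have hD : HasDerivAt (fun e => h (α * Real.exp (-e * L)))
        (γ α / α * (α * (Real.exp (-(0:ℝ) * L) * (-1 * L)))) 0 := by
      have := hc.comp 0 hinner; exact this
    rw [hasDerivAt_iff_tendsto_slope] at hD
    have hval : γ α / α * (α * (Real.exp (-(0:ℝ) * L) * (-1 * L))) = -(L * γ α) := by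
      have hαne : α ≠ 0 := ne_of_gt hα
      field_simp
      simp
    rw [hval] at hD
    have hD2 : Tendsto (fun e => -(slope (fun e' => h (α * Real.exp (-e' * L))) 0 e))
        (nhdsWithin 0 {(0:ℝ)}ᶜ) (nhds (L * γ α)) := by
      simpa using hD.neg
    have hT : Tendsto (fun e => Real.exp (-(slope (fun e' => h (α * Real.exp (-e' * L))) 0 e)))
        (nhdsWithin 0 {(0:ℝ)}ᶜ) (nhds (Real.exp (L * γ α))) :=
      (Real.continuous_exp.continuousAt.tendsto).comp hD2
    apply hT.congr'
    filter_upwards [self_mem_nhdsWithin] with e he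
    have hGe : G e α L = Real.exp ((h α - h (α * Real.exp (-e * L))) / e) := by
      rw [hG]
      simp only
      rw [csaux_G γ hγ L hα hα]
    rw [hGe, hhα]
    congr 1
    rw [slope_def_field]
    simp [hhα]
    ring
end
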